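/- Let f : ℂ → ℝ be a continuous function satisfying the sub-mean value property on all of ℂ, i.e., f(x) ≤ (1/2π)∫₀^{2π} f(x + re^{iθ}) dθ for every x ∈ ℂ and r > 0. Suppose f admits a harmonic majorant, i.e., there exists a harmonic function h on ℂ with f ≤ h. Then for every x ∈ ℂ the limit F(x) := lim_{r→∞} (1/2π)∫₀^{2π} f(x + re^{iθ}) dθ exists, the function F is harmonic on ℂ, F is a harmonic majorant of f, and F ≤ H for every harmonic majorant H of f (i.e., F is the least harmonic majorant of f). -/

import Mathlib

open MeasureTheory Metric Complex Filter

/-- The average of `u` over the circle of center `z` and radius `r`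
(with respect to the uniform probability measure on the circle). -/
noncomputable def circleAvg (u : ℂ → ℝ) (z : ℂ) (r : ℝ) : ℝ :=
  (2 * Real.pi)⁻¹ * ∫ θ in (0:ℝ)..(2 * Real.pi), u (z + r * Complex.exp (θ * Complex.I))

lemma circleAvg_def' (u : ℂ → ℝ) (z : ℂ) (r : ℝ) :
    circleAvg u z r = (2 * Real.pi)⁻¹ * ∫ θ in (0:ℝ)..(2 * Real.pi), u (circleMap z r θ) := rfl

lemma intable {u : ℂ → ℝ} {z : ℂ} {r : ℝ} (hr : 0 ≤ r) (hu : ContinuousOn u (sphere z r)) :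
    IntervalIntegrable (fun θ => u (circleMap z r θ)) volume 0 (2 * Real.pi) := by
  apply ContinuousOn.intervalIntegrable
  apply hu.comp (continuous_circleMap z r).continuousOn
  intro θ _
  exact circleMap_mem_sphere z hr θ

lemma circleAvg_const (c : ℝ) (z : ℂ) (r : ℝ) : circleAvg (fun _ => c) z r = c := by
  simp [circleAvg]
  field_simp

lemma circleAvg_sub {u v : ℂ → ℝ} {z : ℂ} {r : ℝ} (hr : 0 ≤ r)
    (hu : ContinuousOn u (sphere z r)) (hv : ContinuousOn v (sphere z r)) :
    circleAvg (u - v) z r = circleAvg u z r - circleAvg v z r := by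
  simp only [circleAvg_def', Pi.sub_apply]
  rw [intervalIntegral.integral_sub (intable hr hu) (intable hr hv)]
  ring

lemma circleAvg_le {u : ℂ → ℝ} {z : ℂ} {r M : ℝ} (hr : 0 < r)
    (hu : ContinuousOn u (sphere z r)) (hM : ∀ w ∈ sphere z r, u w ≤ M) :
    circleAvg u z r ≤ M := by
  rw [circleAvg_def']
  have hle : (∫ θ in (0:ℝ)..(2 * Real.pi), u (circleMap z r θ)) ≤ M * (2 * Real.pi) := by
    have h1 : (∫ θ in (0:ℝ)..(2 * Real.pi), u (circleMap z r θ))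
        ≤ ∫ _ in (0:ℝ)..(2 * Real.pi), M := by
      apply intervalIntegral.integral_mono_on (by positivity) (intable hr.le hu)
        intervalIntegrable_const
      intro θ _; exact hM _ (circleMap_mem_sphere z hr.le θ)
    have h2 : (∫ _ in (0:ℝ)..(2 * Real.pi), M) = M * (2 * Real.pi) := by
      simp [mul_comm]
    linarith
  have h2 : (0:ℝ) < (2 * Real.pi)⁻¹ := by positivity
  have := mul_le_mul_of_nonneg_left hle h2.le
  calc (2 * Real.pi)⁻¹ * ∫ θ in (0:ℝ)..(2 * Real.pi), u (circleMap z r θ)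
      ≤ (2 * Real.pi)⁻¹ * (M * (2 * Real.pi)) := this
    _ = M := by field_simp

lemma circleAvg_eq_max {u : ℂ → ℝ} {z : ℂ} {r M : ℝ} (hr : 0 < r)
    (hu : ContinuousOn u (sphere z r)) (hM : ∀ w ∈ sphere z r, u w ≤ M)
    (havg : M ≤ circleAvg u z r) {θ₀ : ℝ} (hθ : θ₀ ∈ Set.Icc 0 (2 * Real.pi)) :
    u (circleMap z r θ₀) = M := by
  by_contra hne
  have hlt : u (circleMap z r θ₀) < M :=
    lt_of_le_of_ne (hM _ (circleMap_mem_sphere z hr.le θ₀)) hne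
  have hcc : ContinuousOn (fun θ => u (circleMap z r θ)) (Set.Icc 0 (2 * Real.pi)) := by
    apply (hu.comp (continuous_circleMap z r).continuousOn ?_).mono (Set.subset_univ _)
    intro θ _; exact circleMap_mem_sphere z hr.le θ
  have hstrict : (∫ θ in (0:ℝ)..(2 * Real.pi), u (circleMap z r θ))
      < ∫ _ in (0:ℝ)..(2 * Real.pi), M := by
    apply intervalIntegral.integral_lt_integral_of_continuousOn_of_le_of_exists_lt
      (by positivity) hcc continuousOn_const
    · intro θ _; exact hM _ (circleMap_mem_sphere z hr.le θ)
    · exact ⟨θ₀, hθ, hlt⟩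
  have h2 : (∫ _ in (0:ℝ)..(2 * Real.pi), M) = M * (2 * Real.pi) := by simp [mul_comm]
  have h3 : circleAvg u z r < M := by
    rw [circleAvg_def']
    have h4 : (0:ℝ) < (2 * Real.pi)⁻¹ := by positivity
    have := mul_lt_mul_of_pos_left (h2 ▸ hstrict) h4
    calc (2 * Real.pi)⁻¹ * ∫ θ in (0:ℝ)..(2 * Real.pi), u (circleMap z r θ)
        < (2 * Real.pi)⁻¹ * (M * (2 * Real.pi)) := this
      _ = M := by field_simp
  linarith

lemma far_point (z : ℂ) {ε : ℝ} (hε : 0 < ε) :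
    ∃ θ₀ ∈ Set.Icc (0:ℝ) (2 * Real.pi), norm (circleMap z ε θ₀) = norm z + ε := by
  have hpi := Real.pi_pos
  have harg1 := Complex.arg_le_pi z
  have harg2 := Complex.neg_pi_lt_arg z
  have key : ∀ θ : ℝ, Complex.exp (θ * I) = Complex.exp (z.arg * I) →
      norm (circleMap z ε θ) = norm z + ε := by
    intro θ hexp
    have hz : (norm z : ℂ) * Complex.exp (z.arg * I) = z := Complex.norm_mul_exp_arg_mul_I z
    have h1 : circleMap z ε θ = ((norm z : ℂ) + ε) * Complex.exp (z.arg * I) := by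
      rw [circleMap, hexp]
      nth_rewrite 1 [← hz]
      ring
    rw [h1, norm_mul, Complex.norm_exp_ofReal_mul_I, mul_one,
      show ((norm z : ℂ) + (ε:ℂ)) = ((norm z + ε : ℝ) : ℂ) by push_cast; ring,
      Complex.norm_real, Real.norm_eq_abs, _root_.abs_of_nonneg (by positivity : (0:ℝ) ≤ norm z + ε)]
  by_cases h : 0 ≤ z.arg
  · exact ⟨z.arg, ⟨h, by linarith⟩, key _ rfl⟩
  · refine ⟨z.arg + 2 * Real.pi, ⟨by linarith, by linarith⟩, key _ ?_⟩
    push_cast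
    rw [add_mul, Complex.exp_add]
    simp [Complex.exp_two_pi_mul_I]

lemma max_principle {U : Set ℂ} (hUo : IsOpen U) (hUb : Bornology.IsBounded U)
    {v : ℂ → ℝ} (hv : ContinuousOn v (closure U))
    (hsub : ∀ z ∈ U, ∀ s : ℝ, 0 < s → closedBall z s ⊆ U → v z ≤ circleAvg v z s)
    (hbd : ∀ z ∈ frontier U, v z ≤ 0) :
    ∀ z ∈ closure U, v z ≤ 0 := by
  rcases Set.eq_empty_or_nonempty U with hE | hne
  · simp [hE]
  have hKc : IsCompact (closure U) := Metric.isCompact_of_isClosed_isBounded isClosed_closure hUb.closure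
  have hKne : (closure U).Nonempty := hne.closure
  obtain ⟨z₀, hz₀, hmax⟩ := hKc.exists_isMaxOn hKne hv
  set M := v z₀ with hM
  suffices hM0 : M ≤ 0 by
    intro z hz; exact le_trans (hmax hz) hM0
  by_contra hpos
  push_neg at hpos
  -- the set of points where the max is attained
  set T : Set ℂ := closure U ∩ v ⁻¹' {M} with hT
  have hTc : IsClosed T := hv.preimage_isClosed_of_isClosed isClosed_closure isClosed_singleton
  have hTcpt : IsCompact T := hKc.of_isClosed_subset hTc Set.inter_subset_left
  have hTne : T.Nonempty := ⟨z₀, hz₀, rfl⟩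
  obtain ⟨w, hwT, hwmax⟩ := hTcpt.exists_isMaxOn hTne
    (continuous_norm.continuousOn)
  have hvw : v w = M := hwT.2
  have hwU : w ∈ U := by
    have hclos : closure U ⊆ U ∪ frontier U := by
      rw [frontier, interior_eq_iff_isOpen.2 hUo]
      intro x hx
      by_cases hxU : x ∈ U
      · exact Or.inl hxU
      · exact Or.inr ⟨hx, hxU⟩
    rcases hclos hwT.1 with h | h
    · exact h
    · exfalso; have := hbd w h; linarith
  obtain ⟨δ, hδ, hball⟩ := Metric.isOpen_iff.1 hUo w hwU
  set ε := δ / 2 with hε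
  have hεpos : 0 < ε := by positivity
  have hcb : closedBall w ε ⊆ U :=
    le_trans (closedBall_subset_ball (by simp [hε]; linarith)) hball
  have hsphere : sphere w ε ⊆ closure U :=
    le_trans (le_trans sphere_subset_closedBall hcb) subset_closure
  have hvs : ContinuousOn v (sphere w ε) := hv.mono hsphere
  have hle : ∀ x ∈ sphere w ε, v x ≤ M := fun x hx => hmax (hsphere hx)
  have havg : M ≤ circleAvg v w ε := by
    have := hsub w hwU ε hεpos hcb
    rwa [hvw] at this
  obtain ⟨θ₀, hθ₀, hfar⟩ := far_point w hεpos
  have heq := circleAvg_eq_max hεpos hvs hle havg hθ₀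
  have hmem : circleMap w ε θ₀ ∈ T :=
    ⟨hsphere (circleMap_mem_sphere w hεpos.le θ₀), heq⟩
  have := hwmax hmem
  rw [Set.mem_setOf_eq] at this
  have habs : norm (circleMap w ε θ₀) ≤ norm w := this
  rw [hfar] at habs
  linarith

lemma circleMap_zero_ne_zero' {s : ℝ} (hs : s ≠ 0) (θ : ℝ) : circleMap 0 s θ ≠ 0 := by
  intro h
  have := norm_circleMap_zero s θ
  rw [h] at this
  simp at this
  exact hs (abs_eq_zero.1 this.symm)

/-- Mean value property for holomorphic functions (complex-valued version). -/
lemma mvp_holo {F : ℂ → ℂ} {c : ℂ} {s : ℝ} (hs : 0 < s)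
    (hd : ∀ x ∈ closedBall c s, DifferentiableAt ℂ F x) :
    (∫ θ in (0:ℝ)..(2 * Real.pi), F (circleMap c s θ)) = (2 * Real.pi) * F c := by
  have hC : ContinuousOn F (closedBall c s) := fun x hx => (hd x hx).continuousAt.continuousWithinAt
  have hcauchy := circleIntegral_sub_inv_smul_of_differentiable_on_off_countable
    (Set.countable_empty) (mem_ball_self hs) hC
    (fun x hx => hd x (ball_subset_closedBall hx.1))
  rw [circleIntegral] at hcauchy
  have heq : ∀ θ : ℝ, deriv (circleMap c s) θ • (circleMap c s θ - c)⁻¹ • F (circleMap c s θ)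
      = I * F (circleMap c s θ) := by
    intro θ
    rw [deriv_circleMap, circleMap_sub_center, smul_eq_mul, smul_eq_mul]
    field_simp [circleMap_zero_ne_zero' hs.ne']
  simp only [heq] at hcauchy
  rw [intervalIntegral.integral_const_mul] at hcauchy
  have hI : (I : ℂ) ≠ 0 := I_ne_zero
  have : I * ∫ θ in (0:ℝ)..(2 * Real.pi), F (circleMap c s θ)
      = I * ((2 * Real.pi) * F c) := by
    rw [hcauchy, smul_eq_mul]; ring
  exact mul_left_cancel₀ hI this

/-- Mean value property of `log |w - a|` over circles whose closed disk avoids `a`. -/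
lemma mvp_log {a z : ℂ} {s : ℝ} (hs : 0 < s) (hlt : s < dist z a) :
    circleAvg (fun w => Real.log (norm (w - a))) z s
      = Real.log (norm (z - a)) := by
  have hza : z - a ≠ 0 := by
    intro h
    rw [dist_eq_zero.2 (sub_eq_zero.1 h)] at hlt
    linarith
  set F : ℂ → ℂ := fun w => Complex.log ((w - a) / (z - a)) with hF
  have hd' : ∀ x ∈ closedBall z s, DifferentiableAt ℂ F x := by
    intro x hx
    have habs : norm ((x - a) / (z - a) - 1) < 1 := by
      have : (x - a) / (z - a) - 1 = (x - z) / (z - a) := by field_simp; ring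
      rw [this, norm_div]
      rw [div_lt_one (by simpa [norm_pos_iff] using hza)]
      calc norm (x - z) ≤ s := by
            rw [← Complex.dist_eq]; exact mem_closedBall.1 hx
        _ < norm (z - a) := by rwa [Complex.dist_eq] at hlt
    have hslit : (x - a) / (z - a) ∈ Complex.slitPlane := by
      left
      have h1 : (1 - (x - a) / (z - a)).re ≤ norm (1 - (x - a) / (z - a)) :=
        Complex.re_le_norm _
      rw [norm_sub_rev] at h1
      simp only [Complex.sub_re, Complex.one_re] at h1
      linarith
    exact ((differentiableAt_id.sub_const a).div_const (z - a)).clog hslit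
  have hmvp := mvp_holo hs hd'
  have hcF : ContinuousOn F (sphere z s) := fun x hx =>
    (hd' x (sphere_subset_closedBall hx)).continuousAt.continuousWithinAt
  have hccomp : ContinuousOn (fun θ : ℝ => F (circleMap z s θ))
      (Set.uIcc 0 (2 * Real.pi)) := by
    apply hcF.comp (continuous_circleMap z s).continuousOn
    intro θ _; exact circleMap_mem_sphere z hs.le θ
  have hint : IntervalIntegrable (fun θ => F (circleMap z s θ)) volume 0 (2 * Real.pi) :=
    hccomp.intervalIntegrable
  have hre := Complex.reCLM.intervalIntegral_comp_comm hint
  rw [hmvp] at hre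
  have hFz : F z = 0 := by
    simp only [hF]
    rw [div_self hza, Complex.log_one]
  rw [hFz] at hre
  simp only [Complex.reCLM_apply, mul_zero, Complex.zero_re] at hre
  -- pointwise identity
  set C := Real.log (norm (z - a)) with hC
  have hpt : ∀ θ : ℝ, (F (circleMap z s θ)).re
      = Real.log (norm (circleMap z s θ - a)) - C := by
    intro θ
    have hne : circleMap z s θ - a ≠ 0 := by
      intro h
      have h0 : circleMap z s θ = a := sub_eq_zero.1 h
      have h1 : dist (circleMap z s θ) z = s := mem_sphere.1 (circleMap_mem_sphere z hs.le θ)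
      have h2 := dist_triangle z (circleMap z s θ) a
      rw [dist_comm z (circleMap z s θ), h1, h0, dist_self, add_zero] at h2
      linarith
    rw [hF]
    simp only [Complex.log_re, norm_div]
    rw [Real.log_div (by simpa [norm_ne_zero_iff] using hne)
      (by simpa [norm_ne_zero_iff] using hza)]
  have hintre : (∫ θ in (0:ℝ)..(2 * Real.pi),
      (Real.log (norm (circleMap z s θ - a)) - C)) = 0 := by
    have heqint : (∫ θ in (0:ℝ)..(2 * Real.pi),
        (Real.log (norm (circleMap z s θ - a)) - C))
        = ∫ θ in (0:ℝ)..(2 * Real.pi), (F (circleMap z s θ)).re :=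
      intervalIntegral.integral_congr (fun θ _ => (hpt θ).symm)
    rw [heqint, hre]
  have hintegrable : IntervalIntegrable
      (fun θ => Real.log (norm (circleMap z s θ - a))) volume 0 (2 * Real.pi) := by
    have : (fun θ => Real.log (norm (circleMap z s θ - a)))
        = fun θ => (F (circleMap z s θ)).re + C := by
      funext θ; rw [hpt θ]; ring
    rw [this]
    exact ((Complex.continuous_re.comp_continuousOn hccomp).intervalIntegrable).add
      intervalIntegrable_const
  rw [intervalIntegral.integral_sub hintegrable intervalIntegrable_const] at hintre
  have h2 : (∫ _ in (0:ℝ)..(2 * Real.pi), C) = 2 * Real.pi * C := by simp [mul_comm]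
  rw [circleAvg_def']
  have : (∫ θ in (0:ℝ)..(2 * Real.pi), Real.log (norm (circleMap z s θ - a)))
      = 2 * Real.pi * C := by linarith
  rw [this]
  field_simp

lemma circleAvg_add {u v : ℂ → ℝ} {z : ℂ} {r : ℝ} (hr : 0 ≤ r)
    (hu : ContinuousOn u (sphere z r)) (hv : ContinuousOn v (sphere z r)) :
    circleAvg (fun w => u w + v w) z r = circleAvg u z r + circleAvg v z r := by
  simp only [circleAvg_def']
  rw [intervalIntegral.integral_add (intable hr hu) (intable hr hv)]
  ring

lemma circleAvg_const_mul (u : ℂ → ℝ) (c : ℝ) (z : ℂ) (r : ℝ) :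
    circleAvg (fun w => c * u w) z r = c * circleAvg u z r := by
  simp only [circleAvg_def']
  rw [intervalIntegral.integral_const_mul]
  ring

lemma circleAvg_congr {u v : ℂ → ℝ} {z : ℂ} {r : ℝ} (h : ∀ w, u w = v w) :
    circleAvg u z r = circleAvg v z r := by
  simp only [circleAvg_def', h]

set_option maxHeartbeats 1000000 in
lemma liouville_step {g : ℂ → ℝ} (hg : Continuous g)
    (hsub : ∀ x : ℂ, ∀ r : ℝ, 0 < r → g x ≤ circleAvg g x r)
    (hneg : ∀ x, g x ≤ 0) (a b : ℂ) : g b ≤ g a := by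
  refine le_of_forall_pos_le_add (fun ε hε => ?_)
  -- continuity of `g` at `a`
  obtain ⟨δ, hδpos, hδ⟩ := Metric.continuousAt_iff.1 hg.continuousAt (ε/2) (by linarith)
  set r0 : ℝ := δ / 2 with hr0
  have hr0pos : 0 < r0 := by positivity
  have hball : ∀ x ∈ closedBall a r0, g x ≤ g a + ε/2 := by
    intro x hx
    have hd : dist x a < δ := lt_of_le_of_lt (mem_closedBall.1 hx) (by rw [hr0]; linarith)
    have := hδ hd
    rw [Real.dist_eq] at this
    have := abs_lt.1 this
    linarith [this.2]
  by_cases hcase : dist b a ≤ r0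
  · have := hball b (mem_closedBall.2 hcase); linarith
  push_neg at hcase
  set d : ℝ := dist b a with hd
  have hdpos : 0 < d := lt_trans hr0pos hcase
  set M0 : ℝ := g a + ε/2 with hM0
  set K : ℝ := max 0 (-M0) with hK
  set T : ℝ := Real.log r0 + 2 * K * (Real.log d - Real.log r0) / ε + 1 with hT
  set R : ℝ := max (d + 1) (Real.exp T) with hR
  have hRd : d < R := lt_of_lt_of_le (by linarith) (le_max_left _ _)
  have hRpos : 0 < R := lt_trans hdpos hRd
  have hlogRT : T ≤ Real.log R := by
    rw [← Real.log_exp T]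
    exact Real.log_le_log (Real.exp_pos T) (le_max_right _ _)
  have hlogdr0 : Real.log r0 < Real.log d := Real.log_lt_log hr0pos hcase
  have hlogRd : Real.log d < Real.log R := Real.log_lt_log hdpos hRd
  have hDpos : 0 < Real.log R - Real.log r0 := by linarith
  set c2 : ℝ := M0 / (Real.log R - Real.log r0) with hc2
  set v : ℂ → ℝ := fun z =>
    g z - c2 * (Real.log R - Real.log (norm (z - a))) with hv
  set U : Set ℂ := ball a R \ closedBall a r0 with hU
  have hUopen : IsOpen U := isOpen_ball.sdiff isClosed_closedBall
  have hUb : Bornology.IsBounded U := Metric.isBounded_ball.subset Set.diff_subset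
  have hUS : closure U ⊆ closedBall a R ∩ (ball a r0)ᶜ := by
    apply closure_minimal ?_ (isClosed_closedBall.inter isOpen_ball.isClosed_compl)
    intro x hx
    exact ⟨ball_subset_closedBall hx.1, fun hc => hx.2 (ball_subset_closedBall hc)⟩
  have hxnea : ∀ x ∈ closure U, x ≠ a := by
    intro x hx hxa
    have := (hUS hx).2
    apply this
    rw [hxa]
    exact mem_ball_self hr0pos
  have hlogC : ∀ x : ℂ, x ≠ a →
      ContinuousAt (fun w => Real.log (norm (w - a))) x := by
    intro x hx
    have h1 : norm (x - a) ≠ 0 := by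
      simp only [ne_eq, norm_eq_zero, sub_eq_zero]
      exact hx
    have h2 : ContinuousAt (fun w : ℂ => norm (w - a)) x :=
      (continuous_norm.comp (continuous_sub_right a)).continuousAt
    have h3 : ContinuousAt (Real.log ∘ fun w : ℂ => norm (w - a)) x :=
      ContinuousAt.comp (Real.continuousAt_log h1) h2
    exact h3
  have hvcont : ContinuousOn v (closure U) := by
    intro x hx
    exact (hg.continuousAt.sub
      (continuousAt_const.mul (continuousAt_const.sub (hlogC x (hxnea x hx))))).continuousWithinAt
  have hwna : ∀ w ∈ U, w ≠ a := by
    intro w hw hwa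
    apply hw.2
    rw [hwa]
    exact mem_closedBall_self hr0pos.le
  have hvsub : ∀ z ∈ U, ∀ s : ℝ, 0 < s → closedBall z s ⊆ U → v z ≤ circleAvg v z s := by
    intro z hz s hs hcb
    have hanotin : a ∉ closedBall z s := fun hc =>
      (hcb hc).2 (mem_closedBall_self hr0pos.le)
    have hsd : s < dist z a := by
      by_contra hc
      push_neg at hc
      exact hanotin (mem_closedBall.2 (by rw [dist_comm]; exact hc))
    have hsphsub : sphere z s ⊆ U := fun w hw => hcb (sphere_subset_closedBall hw)
    have hlcont : ContinuousOn (fun w => c2 * Real.log (norm (w - a))) (sphere z s) :=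
      fun w hw => (continuousAt_const.mul (hlogC w (hwna w (hsphsub hw)))).continuousWithinAt
    have hveq : ∀ w, v w = g w + ((fun w => c2 * Real.log (norm (w - a))) w
        + (-(c2 * Real.log R))) := by
      intro w
      simp only [hv]
      ring
    rw [circleAvg_congr hveq, circleAvg_add
      (v := fun w => (fun w => c2 * Real.log (norm (w - a))) w + (-(c2 * Real.log R))) hs.le hg.continuousOn
      (fun w hw => ((hlcont w hw).add continuousWithinAt_const)),
      circleAvg_add hs.le hlcont continuousOn_const, circleAvg_const,
      circleAvg_const_mul, mvp_log hs hsd]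
    have := hsub z s hs
    rw [hveq z]
    simp only
    linarith
  have hbd : ∀ z ∈ frontier U, v z ≤ 0 := by
    intro z hz
    have hfr : frontier U ⊆ sphere a R ∪ sphere a r0 := by
      have hUeq : U = ball a R ∩ (closedBall a r0)ᶜ := Set.diff_eq _ _
      rw [hUeq]
      intro x hx
      rcases frontier_inter_subset _ _ hx with h | h
      · left
        rw [frontier_ball a hRpos.ne'] at h
        exact h.1
      · right
        rw [frontier_compl, frontier_closedBall a hr0pos.ne'] at h
        exact h.2
    rcases hfr hz with h | h
    · have habs : norm (z - a) = R := by
        rw [← Complex.dist_eq]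
        exact mem_sphere.1 h
      have : v z = g z := by
        simp only [hv, habs, sub_self, mul_zero]
        ring
      rw [this]
      exact hneg z
    · have habs : norm (z - a) = r0 := by
        rw [← Complex.dist_eq]
        exact mem_sphere.1 h
      have hc2D : c2 * (Real.log R - Real.log r0) = M0 :=
        div_mul_cancel₀ M0 hDpos.ne'
      have hvz : v z = g z - M0 := by
        simp only [hv, habs]
        rw [hc2D]
      rw [hvz]
      have := hball z (mem_closedBall.2 (le_of_eq (mem_sphere.1 h)))
      linarith
  have hbU : b ∈ U := by
    constructor
    · exact mem_ball.2 hRd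
    · intro hc
      exact absurd (mem_closedBall.1 hc) (not_le.2 hcase)
  have hvb := max_principle hUopen hUb hvcont hvsub hbd b (subset_closure hbU)
  have habsb : norm (b - a) = d := (Complex.dist_eq b a).symm
  rw [hv] at hvb
  simp only [habsb] at hvb
  -- now `g b ≤ c2 * (Real.log R - Real.log d)`; final algebra
  have hgb : g b ≤ c2 * (Real.log R - Real.log d) := by linarith
  have hKey : (ε/2) * (Real.log R - Real.log r0) ≥ K * (Real.log d - Real.log r0) := by
    have h1 : Real.log R - Real.log r0 ≥ 2 * K * (Real.log d - Real.log r0) / ε + 1 := by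
      have := hlogRT
      rw [hT] at this
      linarith
    have h2 : (ε/2) * (2 * K * (Real.log d - Real.log r0) / ε)
        = K * (Real.log d - Real.log r0) := by
      field_simp
    nlinarith [hε, h1]
  have hKM0 : K ≥ -M0 := le_max_right _ _
  have hK0 : K ≥ 0 := le_max_left _ _
  clear_value v U c2 R T K M0 d r0
  have hfinal : c2 * (Real.log R - Real.log d) ≤ M0 + ε/2 := by
    rw [hc2, div_mul_eq_mul_div, div_le_iff₀ hDpos]
    nlinarith [hKey, mul_nonneg (by linarith : (0:ℝ) ≤ M0 + K)
      (by linarith : (0:ℝ) ≤ Real.log d - Real.log r0)]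
  rw [hM0] at hfinal
  linarith


/-- A function is harmonic on `ℂ ≅ ℝ²` iff it is continuous and satisfies the
mean value property over every circle; this is the classical characterization
equivalent to being `C²` with vanishing Laplacian. -/
def HarmonicPlane (h : ℂ → ℝ) : Prop :=
  Continuous h ∧ ∀ x : ℂ, ∀ r : ℝ, 0 < r → h x = circleAvg h x r

/-- least harmonic majorant as a limit of circle averages, in
`ℂ ≅ ℝ²`: if `f` is continuous, satisfies the sub-mean value property over
all circles (i.e. is subharmonic on `ℂ`) and admits a harmonic majorant, then
`F(x) := lim_{r→∞} (1/2π)∫₀^{2π} f(x+re^{iθ}) dθ` exists for every `x`, `F` is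
harmonic, `F` majorizes `f`, and `F` is below every harmonic majorant of `f`,
i.e. `F` is the least harmonic majorant of `f`. -/
theorem least_harmonic_majorant_plane (f : ℂ → ℝ) (hcont : Continuous f)
    (hsub : ∀ x : ℂ, ∀ r : ℝ, 0 < r → f x ≤ circleAvg f x r)
    (hmaj : ∃ h : ℂ → ℝ, HarmonicPlane h ∧ ∀ x, f x ≤ h x) :
    ∃ F : ℂ → ℝ,
      (∀ x : ℂ, Tendsto (fun r : ℝ => circleAvg f x r) atTop (nhds (F x))) ∧
      HarmonicPlane F ∧
      (∀ x : ℂ, f x ≤ F x) ∧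
      (∀ H : ℂ → ℝ, HarmonicPlane H → (∀ x, f x ≤ H x) → ∀ x, F x ≤ H x) := by
  obtain ⟨h, ⟨hhc, hhmvp⟩, hfh⟩ := hmaj
  set g : ℂ → ℝ := fun x => f x - h x with hg
  have hgc : Continuous g := hcont.sub hhc
  have hgneg : ∀ x, g x ≤ 0 := fun x => by simp only [hg]; linarith [hfh x]
  have hgsub : ∀ x : ℂ, ∀ r : ℝ, 0 < r → g x ≤ circleAvg g x r := by
    intro x r hr
    have heq : circleAvg g x r = circleAvg f x r - circleAvg h x r := by
      have : ∀ w, g w = (fun w => f w) w - (fun w => h w) w := fun w => rfl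
      rw [circleAvg_congr this,
        show (fun w => (fun w => f w) w - (fun w => h w) w) = (fun w => f w) - fun w => h w
          from rfl,
        circleAvg_sub hr.le hcont.continuousOn hhc.continuousOn]
    rw [heq, ← hhmvp x r hr]
    simp only [hg]
    linarith [hsub x r hr]
  have hgconst : ∀ x y : ℂ, g x = g y :=
    fun x y => le_antisymm (liouville_step hgc hgsub hgneg y x) (liouville_step hgc hgsub hgneg x y)
  have hMVP : ∀ x : ℂ, ∀ r : ℝ, 0 < r → circleAvg f x r = f x := by
    intro x r hr
    have hfeq : ∀ w, f w = g w + h w := fun w => by simp only [hg]; ring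
    have hgx : ∀ w, g w = g x := fun w => hgconst w x
    have h1 : circleAvg f x r = circleAvg (fun w => (fun _ => g x) w + h w) x r := by
      apply circleAvg_congr
      intro w
      rw [hfeq w, hgx w]
    rw [h1, circleAvg_add hr.le continuousOn_const hhc.continuousOn,
      circleAvg_const, ← hhmvp x r hr, hfeq x, hgx x]
  refine ⟨f, ?_, ⟨hcont, fun x r hr => (hMVP x r hr).symm⟩, fun x => le_refl _,
    fun H _ hH x => hH x⟩
  intro x
  have hev : ∀ᶠ r in atTop, circleAvg f x r = f x :=
    eventually_atTop.2 ⟨1, fun r hr => hMVP x r (by linarith)⟩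
  exact Tendsto.congr' (hev.mono fun r h => h.symm) tendsto_const_nhds
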